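/- Let Δ = {x_0, x_1, …, x_d} be a regular simplex in ℝ^d with edge length 1, let 0 < α < 1/4, and let v be a unit vector. Suppose the edge x_0 x_1 satisfies ⟨v, x_0 - x_1⟩ = max_{i,j} ⟨v, x_i - x_j⟩ and ⟨v, x_0 - x_1⟩ ≤ 1 - 2α. Set r = ⟨x_0 + x_1, v⟩/2. Then for every vertex x_i and every e with ‖e‖ ≤ α, the point x = x_i + e satisfies |⟨x, v⟩ - r| ≤ 1/2. -/
import Mathlib


open RealInnerProductSpace

theorem simplex_neighborhood_in_slab
    (d : ℕ) (x : Fin (d + 1) → EuclideanSpace ℝ (Fin d))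
    (hedge : ∀ i j, i ≠ j → ‖x i - x j‖ = 1)
    (α : ℝ) (hα : 0 < α) (hα2 : α < 1 / 4)
    (v : EuclideanSpace ℝ (Fin d)) (hv : ‖v‖ = 1)
    (hmax : ∀ i j, ⟪v, x i - x j⟫ ≤ ⟪v, x 0 - x 1⟫)
    (hsmall : ⟪v, x 0 - x 1⟫ ≤ 1 - 2 * α) :
    ∀ (i : Fin (d + 1)) (e : EuclideanSpace ℝ (Fin d)), ‖e‖ ≤ α →
      |⟪x i + e, v⟫ - ⟪x 0 + x 1, v⟫ / 2| ≤ 1 / 2 := by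
  intro i e he
  have h1 := hmax i 1
  have h2 := hmax 0 i
  have hev : |⟪e, v⟫| ≤ α := by
    calc |⟪e, v⟫| ≤ ‖e‖ * ‖v‖ := abs_real_inner_le_norm e v
    _ ≤ α := by rw [hv]; simpa using he
  rw [abs_le] at hev ⊢
  simp only [inner_sub_right, inner_add_left, inner_add_right, real_inner_comm (x i) v, real_inner_comm (x 0) v, real_inner_comm (x 1) v,
    real_inner_comm e v] at *
  constructor <;> linarith
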